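/- There exists an open dense set U ⊆ ω^ω × ω^ω such that for every Miller tree T ⊆ ω^{<ω}, the set [T] × [T] is not contained in U ∪ Δ, where Δ = {(x,x) : x ∈ ω^ω}. -/

import Mathlib

open Set

/-- `T` is a tree on `ℕ`: a set of finite sequences closed under initial segments. -/
def IsTree (T : Set (List ℕ)) : Prop := ∀ σ ∈ T, ∀ n : ℕ, σ.take n ∈ T

/-- The body of a tree: all infinite sequences all of whose initial segments lie in `T`. -/
def body (T : Set (List ℕ)) : Set (ℕ → ℕ) :=
  {x | ∀ n : ℕ, List.ofFn (fun i : Fin n => x i) ∈ T}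

/-- `T` is a Miller tree: a nonempty tree in which every node has an extension
with infinitely many immediate successors. -/
def IsMillerTree (T : Set (List ℕ)) : Prop :=
  T.Nonempty ∧ IsTree T ∧
    ∀ σ ∈ T, ∃ τ ∈ T, σ <+: τ ∧ {a : ℕ | τ ++ [a] ∈ T}.Infinite

/-- The diagonal of the square of Baire space. -/
def diag : Set ((ℕ → ℕ) × (ℕ → ℕ)) := {p | p.1 = p.2}

namespace MillerAux

/-- The restriction of `x` to its first `n` values, as a list. -/
def res (x : ℕ → ℕ) (n : ℕ) : List ℕ := List.ofFn fun i : Fin n => x i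

@[simp] lemma res_length (x : ℕ → ℕ) (n : ℕ) : (res x n).length = n := by
  simp [res]

lemma res_getD (x : ℕ → ℕ) {n i : ℕ} (h : i < n) : (res x n).getD i 0 = x i := by
  rw [List.getD_eq_getElem _ _ (by simp [h])]
  simp [res]

lemma mem_res (x : ℕ → ℕ) {n j : ℕ} (h : j < n) : x j ∈ res x n := by
  rw [res, List.mem_ofFn]
  exact ⟨⟨j, h⟩, rfl⟩

/-- A pair of finite sequences is *bad* if they are incomparable and each value of either
sequence is smaller than the length of the other sequence. -/
def badPair (σ τ : List ℕ) : Prop :=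
  (∃ i, i < σ.length ∧ i < τ.length ∧ σ.getD i 0 ≠ τ.getD i 0) ∧
  (∀ v ∈ σ, v < τ.length) ∧ (∀ v ∈ τ, v < σ.length)

/-- The open dense set: pairs having a bad pair of initial segments. -/
def UU : Set ((ℕ → ℕ) × (ℕ → ℕ)) := {p | ∃ m n, badPair (res p.1 m) (res p.2 n)}

lemma cylOpen (z : ℕ → ℕ) (N : ℕ) : IsOpen {x : ℕ → ℕ | ∀ i < N, x i = z i} := by
  have h : {x : ℕ → ℕ | ∀ i < N, x i = z i}
      = ⋂ i ∈ Finset.range N, (fun x : ℕ → ℕ => x i) ⁻¹' {z i} := by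
    ext x; simp [Finset.mem_range]
  rw [h]
  exact isOpen_biInter_finset fun i _ =>
    (isOpen_discrete {z i}).preimage (continuous_apply i)

lemma res_congr {x y : ℕ → ℕ} {n : ℕ} (h : ∀ i < n, y i = x i) : res y n = res x n := by
  apply List.ext_getElem (by simp)
  intro i h1 h2
  simp only [res, List.getElem_ofFn]
  exact h i (by simpa [res] using h1)

lemma isOpen_UU : IsOpen UU := by
  rw [isOpen_iff_forall_mem_open]
  rintro ⟨x, y⟩ ⟨m, n, hb⟩
  refine ⟨Prod.fst ⁻¹' {x' : ℕ → ℕ | ∀ i < m, x' i = x i} ∩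
      Prod.snd ⁻¹' {y' : ℕ → ℕ | ∀ i < n, y' i = y i}, ?_, ?_, ?_, ?_⟩
  · rintro ⟨x', y'⟩ ⟨h1, h2⟩
    exact ⟨m, n, by
      rwa [res_congr (h1 : ∀ i < m, x' i = x i), res_congr (h2 : ∀ i < n, y' i = y i)]⟩
  · exact ((cylOpen x m).preimage continuous_fst).inter ((cylOpen y n).preimage continuous_snd)
  · exact fun i _ => rfl
  · exact fun i _ => rfl

lemma nbhd_cyl {A : Set (ℕ → ℕ)} {x : ℕ → ℕ} (hA : A ∈ nhds x) :
    ∃ N, {y : ℕ → ℕ | ∀ i < N, y i = x i} ⊆ A := by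
  rw [nhds_pi, Filter.mem_pi] at hA
  obtain ⟨I, Ifin, t, ht, hsub⟩ := hA
  obtain ⟨N, hN⟩ := Ifin.bddAbove
  refine ⟨N + 1, fun y hy => hsub fun i hi => ?_⟩
  rw [hy i (Nat.lt_succ_of_le (hN hi))]
  exact mem_of_mem_nhds (ht i)

lemma dense_UU : Dense UU := by
  rw [dense_iff_inter_open]
  rintro O hO ⟨⟨x, y⟩, hp⟩
  have hmem := hO.mem_nhds hp
  rw [nhds_prod_eq, Filter.mem_prod_iff] at hmem
  obtain ⟨A, hA, B, hB, hAB⟩ := hmem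
  obtain ⟨N₁, hN₁⟩ := nbhd_cyl hA
  obtain ⟨N₂, hN₂⟩ := nbhd_cyl hB
  set N := max N₁ N₂ with hNdef
  set q1 : ℕ → ℕ := fun i => if i < N then x i else if i = N then y N + 1 else 0 with hq1
  set q2 : ℕ → ℕ := fun i => if i < N then y i else if i = N then y N else 0 with hq2
  set M := (Finset.range (N + 1)).sup fun j => max (q1 j) (q2 j) with hM
  set L := max (N + 1) (M + 1) with hL
  have hNL : N < L := lt_of_lt_of_le (Nat.lt_succ_self N) (le_max_left _ _)
  have hsmall : ∀ j, j < L → q1 j < L ∧ q2 j < L := by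
    intro j hj
    have hL1 : N + 1 ≤ L := le_max_left _ _
    have hL2 : M + 1 ≤ L := le_max_right _ _
    by_cases hjN : j ≤ N
    · have h1 : max (q1 j) (q2 j) ≤ M :=
        Finset.le_sup (f := fun j => max (q1 j) (q2 j)) (Finset.mem_range.mpr (by omega))
      have h2 := le_trans (le_max_left (q1 j) (q2 j)) h1
      have h3 := le_trans (le_max_right (q1 j) (q2 j)) h1
      exact ⟨by omega, by omega⟩
    · push_neg at hjN
      have ha : ¬ j < N := by omega
      have hb : ¬ j = N := by omega
      have e1 : q1 j = 0 := by simp [hq1, ha, hb]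
      have e2 : q2 j = 0 := by simp [hq2, ha, hb]
      exact ⟨by omega, by omega⟩
  refine ⟨(q1, q2), ?_, ⟨L, L, ⟨N, ?_, ?_, ?_⟩, ?_, ?_⟩⟩
  · apply hAB
    constructor
    · exact hN₁ fun i hi => by
        simp [hq1, show i < N from lt_of_lt_of_le hi (le_max_left _ _)]
    · exact hN₂ fun i hi => by
        simp [hq2, show i < N from lt_of_lt_of_le hi (le_max_right _ _)]
  · simpa using hNL
  · simpa using hNL
  · rw [res_getD _ hNL, res_getD _ hNL]
    simp [hq1, hq2]
  · intro v hv
    rw [res, List.mem_ofFn] at hv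
    obtain ⟨⟨j, hj⟩, rfl⟩ := hv
    simpa using (hsmall j hj).1
  · intro v hv
    rw [res, List.mem_ofFn] at hv
    obtain ⟨⟨j, hj⟩, rfl⟩ := hv
    simpa using (hsmall j hj).2

end MillerAux

open MillerAux in
/-- There is an open dense subset `U` of the plane of Baire space such that
`[T] × [T] ⊄ U ∪ Δ` for every Miller tree `T`. -/
theorem openDense_omitting_miller_squares :
    ∃ U : Set ((ℕ → ℕ) × (ℕ → ℕ)), IsOpen U ∧ Dense U ∧
      ∀ T : Set (List ℕ), IsMillerTree T → ¬ (body T ×ˢ body T ⊆ U ∪ diag) := by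
  classical
  refine ⟨UU, isOpen_UU, dense_UU, ?_⟩
  intro T hT hsub
  obtain ⟨⟨ρ, hρ⟩, htree, hsp⟩ := hT
  obtain ⟨t₀, ht₀T, -, ht₀inf⟩ := hsp ρ hρ
  -- choice of a large successor of a splitting node
  have HA : ∀ C : List ℕ, ∀ h : ℕ, ∃ a : ℕ,
      {b : ℕ | C ++ [b] ∈ T}.Infinite → h < a ∧ C ++ [a] ∈ T := by
    intro C h
    by_cases hC : {b : ℕ | C ++ [b] ∈ T}.Infinite
    · obtain ⟨a, haS, ha⟩ := hC.exists_gt h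
      exact ⟨a, fun _ => ⟨ha, haS⟩⟩
    · exact ⟨0, fun h' => absurd h' hC⟩
  choose A hA using HA
  -- choice of a splitting node above a node
  have HE : ∀ N : List ℕ, ∃ τ : List ℕ,
      N ∈ T → τ ∈ T ∧ N <+: τ ∧ {b : ℕ | τ ++ [b] ∈ T}.Infinite := by
    intro N
    by_cases hN : N ∈ T
    · obtain ⟨τ, h1, h2, h3⟩ := hsp N hN
      exact ⟨τ, fun _ => ⟨h1, h2, h3⟩⟩
    · exact ⟨[], fun h => absurd h hN⟩
  choose E hE using HE
  -- the fusion state machine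
  obtain ⟨S, v, hS0, hv, hSrec⟩ :
      ∃ (S : ℕ → List ℕ × List ℕ × ℕ) (v : ℕ → ℕ),
        S 0 = (t₀, t₀, t₀.length) ∧ (∀ n, v n = A (S n).1 (S n).2.2) ∧
        ∀ n, S (n + 1) = ((S n).2.1, E ((S n).1 ++ [A (S n).1 (S n).2.2]),
          max (max (S n).2.2 (A (S n).1 (S n).2.2))
            (E ((S n).1 ++ [A (S n).1 (S n).2.2])).length) := by
    refine ⟨fun n => (fun s : List ℕ × List ℕ × ℕ =>
      (s.2.1, E (s.1 ++ [A s.1 s.2.2]),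
        max (max s.2.2 (A s.1 s.2.2)) (E (s.1 ++ [A s.1 s.2.2])).length))^[n]
        (t₀, t₀, t₀.length),
      fun n => A ((fun s : List ℕ × List ℕ × ℕ =>
        (s.2.1, E (s.1 ++ [A s.1 s.2.2]),
          max (max s.2.2 (A s.1 s.2.2)) (E (s.1 ++ [A s.1 s.2.2])).length))^[n]
          (t₀, t₀, t₀.length)).1 ((fun s : List ℕ × List ℕ × ℕ =>
        (s.2.1, E (s.1 ++ [A s.1 s.2.2]),
          max (max s.2.2 (A s.1 s.2.2)) (E (s.1 ++ [A s.1 s.2.2])).length))^[n]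
          (t₀, t₀, t₀.length)).2.2,
      by simp, fun n => rfl, fun n => Function.iterate_succ_apply' _ n _⟩
  have hC1 : ∀ n, (S (n + 1)).1 = (S n).2.1 := fun n => by rw [hSrec]
  have hD1 : ∀ n, (S (n + 1)).2.1 = E ((S n).1 ++ [v n]) := fun n => by rw [hSrec, hv]
  have hh1 : ∀ n, (S (n + 1)).2.2 =
      max (max (S n).2.2 (v n)) (E ((S n).1 ++ [v n])).length := fun n => by rw [hSrec, hv]
  -- invariant
  have Inv : ∀ n, ((S n).1 ∈ T ∧ {b : ℕ | (S n).1 ++ [b] ∈ T}.Infinite) ∧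
      ((S n).2.1 ∈ T ∧ {b : ℕ | (S n).2.1 ++ [b] ∈ T}.Infinite) ∧
      (S n).1.length ≤ (S n).2.2 ∧ (S n).2.1.length ≤ (S n).2.2 := by
    intro n
    induction n with
    | zero =>
      rw [hS0]
      exact ⟨⟨ht₀T, ht₀inf⟩, ⟨ht₀T, ht₀inf⟩, le_rfl, le_rfl⟩
    | succ n ih =>
      obtain ⟨⟨hCT, hCinf⟩, ⟨hDT, hDinf⟩, hlC, hlD⟩ := ih
      have hstep := hA (S n).1 (S n).2.2 hCinf
      rw [← hv n] at hstep
      have hEstep := hE ((S n).1 ++ [v n]) hstep.2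
      refine ⟨?_, ?_, ?_, ?_⟩
      · rw [hC1 n]; exact ⟨hDT, hDinf⟩
      · rw [hD1 n]; exact ⟨hEstep.1, hEstep.2.2⟩
      · rw [hC1 n, hh1 n]
        exact le_trans hlD (le_trans (le_max_left _ _) (le_max_left _ _))
      · rw [hD1 n, hh1 n]; exact le_max_right _ _
  have hvgt : ∀ n, (S n).2.2 < v n := fun n => by
    have h := hA (S n).1 (S n).2.2 (Inv n).1.2
    rw [← hv n] at h; exact h.1
  have hNT : ∀ n, (S n).1 ++ [v n] ∈ T := fun n => by
    have h := hA (S n).1 (S n).2.2 (Inv n).1.2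
    rw [← hv n] at h; exact h.2
  have hEpre : ∀ n, ((S n).1 ++ [v n]) <+: (S (n + 1)).2.1 := fun n => by
    rw [hD1 n]; exact (hE _ (hNT n)).2.1
  have hvh : ∀ n, v n ≤ (S (n + 1)).2.2 := fun n => by
    rw [hh1 n]; exact le_trans (le_max_right _ _) (le_max_left _ _)
  have hvmono : StrictMono v :=
    strictMono_nat_of_lt_succ fun n => lt_of_le_of_lt (hvh n) (hvgt (n + 1))
  have hvge : ∀ n, n ≤ v n := fun n => hvmono.le_apply
  -- the node chains
  set zs : ℕ → List ℕ := fun n => (S n).1 ++ [v n] with hzs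
  have hzlen : ∀ n, (zs n).length = (S n).1.length + 1 := fun n => by simp [hzs]
  have hzT : ∀ n, zs n ∈ T := hNT
  have hchain2 : ∀ n, zs n <+: zs (n + 2) := by
    intro n
    have h1 : zs n <+: (S (n + 2)).1 := by rw [hC1 (n + 1)]; exact hEpre n
    exact h1.trans (List.prefix_append _ _)
  have hchainr : ∀ r j k, j ≤ k → zs (2 * j + r) <+: zs (2 * k + r) := by
    intro r j k hjk
    induction k with
    | zero =>
      have : j = 0 := by omega
      subst this; exact List.prefix_refl _
    | succ k ih =>
      by_cases h : j = k + 1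
      · subst h; exact List.prefix_refl _
      · have h2 := hchain2 (2 * k + r)
        have e : 2 * (k + 1) + r = 2 * k + r + 2 := by ring
        rw [e]
        exact (ih (by omega)).trans h2
  have hlenk : ∀ r k, k ≤ (S (2 * k + r)).1.length := by
    intro r k
    induction k with
    | zero => exact Nat.zero_le _
    | succ k ih =>
      have h1 : zs (2 * k + r) <+: (S (2 * k + r + 2)).1 := by
        rw [hC1 (2 * k + r + 1)]; exact hEpre _
      have h2 := h1.length_le
      rw [hzlen] at h2
      have e : 2 * (k + 1) + r = 2 * k + r + 2 := by ring
      rw [e]; omega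
  -- the two branches
  set w : ℕ → ℕ → ℕ := fun r i => (zs (2 * i + r)).getD i 0 with hw
  have hilen : ∀ r i, i < (zs (2 * i + r)).length := fun r i => by
    rw [hzlen]; exact Nat.lt_succ_of_le (hlenk r i)
  have hcoh : ∀ r k i, i < (zs (2 * k + r)).length → w r i = (zs (2 * k + r)).getD i 0 := by
    intro r k i hi
    show (zs (2 * i + r)).getD i 0 = (zs (2 * k + r)).getD i 0
    rcases le_total i k with h | h
    · rw [List.getD_eq_getElem _ _ (hilen r i), List.getD_eq_getElem _ _ hi]
      exact (hchainr r i k h).getElem (hilen r i)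
    · rw [List.getD_eq_getElem _ _ (hilen r i), List.getD_eq_getElem _ _ hi]
      exact ((hchainr r k i h).getElem hi).symm
  have hbody : ∀ r, w r ∈ body T := by
    intro r
    intro n
    have hn : n ≤ (S (2 * n + r)).1.length := hlenk r n
    have heq : List.ofFn (fun i : Fin n => w r i) = (zs (2 * n + r)).take n := by
      apply List.ext_getElem
      · rw [List.length_take, hzlen]; simp; omega
      · intro i h1 h2
        have h1' : i < n := by simpa using h1
        have hi : i < (zs (2 * n + r)).length := by rw [hzlen]; omega
        rw [List.getElem_ofFn, List.getElem_take]
        rw [hcoh r n i hi, List.getD_eq_getElem _ _ hi]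
    rw [heq]
    exact htree _ (hzT _) n
  have hval : ∀ r k, w r ((S (2 * k + r)).1.length) = v (2 * k + r) := by
    intro r k
    have hi : (S (2 * k + r)).1.length < (zs (2 * k + r)).length := by rw [hzlen]; omega
    rw [hcoh r k _ hi, List.getD_eq_getElem _ _ hi]
    simp only [hzs]
    exact List.getElem_concat_length rfl _
  have hS01 : (S 0).1 = t₀ := by rw [hS0]
  have hS11 : (S 1).1 = t₀ := by rw [hC1 0, hS0]
  have key : ∀ n, (S (n + 2)).1.length < v (n + 1) := fun n => by
    rw [hC1 (n + 1)]
    exact lt_of_le_of_lt (Inv (n + 1)).2.2.2 (hvgt (n + 1))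
  -- agreement below the stem, and the split values
  have hagree : ∀ i, i < t₀.length → w 0 i = w 1 i := by
    intro i hi
    have hi0 : i < (zs 0).length := by rw [hzlen, hS01]; omega
    have hi1 : i < (zs 1).length := by rw [hzlen, hS11]; omega
    have e0 : w 0 i = (zs 0).getD i 0 := hcoh 0 0 i (by simpa using hi0)
    have e1 : w 1 i = (zs 1).getD i 0 := hcoh 1 0 i (by simpa using hi1)
    rw [e0, e1, List.getD_eq_getElem _ _ hi0, List.getD_eq_getElem _ _ hi1]
    simp only [hzs]
    rw [List.getElem_append_left (by rw [hS01]; omega),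
      List.getElem_append_left (by rw [hS11]; omega)]
    have e2 : (S 0).1 = (S 1).1 := by rw [hS01, hS11]
    congr 1
  have hx0 : w 0 t₀.length = v 0 := by
    have h := hval 0 0
    rwa [show 2 * 0 + 0 = 0 from rfl, hS01] at h
  have hy0 : w 1 t₀.length = v 1 := by
    have h := hval 1 0
    rwa [show 2 * 0 + 1 = 1 from rfl, hS11] at h
  have hxy_ne : w 0 ≠ w 1 := by
    intro h
    have h' := congrFun h t₀.length
    rw [hx0, hy0] at h'
    exact absurd h' (Nat.ne_of_lt (hvmono (by omega : (0:ℕ) < 1)))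
  -- derive the contradiction
  have hmem := hsub (show (w 0, w 1) ∈ body T ×ˢ body T from ⟨hbody 0, hbody 1⟩)
  rcases hmem with hU | hd
  swap
  · exact hxy_ne hd
  obtain ⟨m, n, ⟨i, him, hin, hnei⟩, hs1, hs2⟩ := hU
  rw [res_length] at him hin
  rw [res_getD _ him, res_getD _ hin] at hnei
  have hil : t₀.length ≤ i := by
    by_contra h'
    push_neg at h'
    exact hnei (hagree i h')
  have hlm : t₀.length < m := lt_of_le_of_lt hil him
  have hln : t₀.length < n := lt_of_le_of_lt hil hin
  have hsx : ∀ j, j < m → w 0 j < n := by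
    intro j hj
    have h := hs1 (w 0 j) (mem_res _ hj)
    rwa [res_length] at h
  have hsy : ∀ j, j < n → w 1 j < m := by
    intro j hj
    have h := hs2 (w 1 j) (mem_res _ hj)
    rwa [res_length] at h
  have hex : ∃ k, m ≤ v (2 * k + 1) :=
    ⟨m, le_trans (by omega) (hvge (2 * m + 1))⟩
  by_cases h0 : m ≤ v 1
  · have h := hsy t₀.length hln
    rw [hy0] at h
    omega
  · obtain ⟨j, hjk⟩ : ∃ j, Nat.find hex = j + 1 := by
      refine Nat.exists_eq_succ_of_ne_zero ?_
      intro h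
      apply h0
      have hsp0 := Nat.find_spec hex
      rw [h] at hsp0
      simpa using hsp0
    have hspec : m ≤ v (2 * (j + 1) + 1) := by
      have h := Nat.find_spec hex
      rwa [hjk] at h
    have hmin : v (2 * j + 1) < m := by
      have h := Nat.find_min hex (show j < Nat.find hex by omega)
      omega
    have hp : (S (2 * j + 2)).1.length < v (2 * j + 1) := key (2 * j)
    have hxval : w 0 ((S (2 * j + 2)).1.length) = v (2 * j + 2) := by
      have h := hval 0 (j + 1)
      rwa [show 2 * (j + 1) + 0 = 2 * j + 2 from by ring] at h
    have h1 : v (2 * j + 2) < n := by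
      have h := hsx _ (lt_trans hp hmin)
      rwa [hxval] at h
    have hq : (S (2 * j + 3)).1.length < v (2 * j + 2) := key (2 * j + 1)
    have hyval : w 1 ((S (2 * j + 3)).1.length) = v (2 * j + 3) := by
      have h := hval 1 (j + 1)
      rwa [show 2 * (j + 1) + 1 = 2 * j + 3 from by ring] at h
    have h2 : v (2 * j + 3) < m := by
      have h := hsy _ (lt_trans hq h1)
      rwa [hyval] at h
    rw [show 2 * (j + 1) + 1 = 2 * j + 3 from by ring] at hspec
    omega
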